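/- Let V, Q, W be finite-dimensional real vector spaces with Q a 3-dimensional inner product space and dim V ≥ 3, and suppose curvature operators R^V : Λ²T → End(V), R^Q : Λ²T → so(Q), R^W : Λ²T → End(W) on T = (V⊗Q) ⊕ W combine to R = (R^V ⊗ id_Q + id_V ⊗ R^Q) ⊕ R^W satisfying the algebraic first Bianchi identity on T. If R^Q = 0 then R^V = 0; and conversely, if R^V = 0 and dim W > 0, then R^Q = 0. -/
import Mathlib


open TensorProduct Module RealInnerProductSpace


private lemma exists_dual_fun {K V : Type*} [Field K] [AddCommGroup V] [Module K V]
    {v v' v'' : V} (h : v'' ∉ Submodule.span K {v, v'}) :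
    ∃ f : V →ₗ[K] K, f v = 0 ∧ f v' = 0 ∧ f v'' = 1 := by
  set p := Submodule.span K ({v, v'} : Set V) with hp
  have h0 : p.mkQ v'' ≠ 0 := by
    simpa [Submodule.Quotient.mk_eq_zero] using h
  obtain ⟨φ, hφ⟩ : ∃ φ : Module.Dual K (V ⧸ p), φ (p.mkQ v'') ≠ 0 := by
    by_contra hc; push_neg at hc
    exact h0 ((Module.forall_dual_apply_eq_zero_iff K _).mp hc)
  have hvm : v ∈ p := Submodule.subset_span (Set.mem_insert _ _)
  have hvm' : v' ∈ p := Submodule.subset_span (Set.mem_insert_of_mem _ rfl)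
  have hv : p.mkQ v = 0 := (Submodule.Quotient.mk_eq_zero p).mpr hvm
  have hv' : p.mkQ v' = 0 := (Submodule.Quotient.mk_eq_zero p).mpr hvm'
  refine ⟨(φ (p.mkQ v''))⁻¹ • (φ ∘ₗ p.mkQ), by simp [hv], by simp [hv'], ?_⟩
  simp only [LinearMap.smul_apply, LinearMap.comp_apply, smul_eq_mul]
  exact inv_mul_cancel₀ hφ

private lemma exists_notin_span {V : Type*} [AddCommGroup V] [Module ℝ V]
    [FiniteDimensional ℝ V] (hV : 3 ≤ finrank ℝ V) (v v' : V) :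
    ∃ v'', v'' ∉ Submodule.span ℝ {v, v'} := by
  classical
  have hle : finrank ℝ (Submodule.span ℝ ({v, v'} : Set V)) ≤ 2 := by
    refine (finrank_span_le_card ({v, v'} : Set V)).trans ?_
    have : ({v, v'} : Set V).toFinset ⊆ {v, v'} := by
      intro x hx; simpa using (Set.mem_toFinset.mp hx)
    exact (Finset.card_le_card this).trans (by
      exact (Finset.card_insert_le _ _).trans (by simp))
  have hne : Submodule.span ℝ ({v, v'} : Set V) ≠ ⊤ := by
    intro htop
    rw [htop, finrank_top] at hle
    omega
  obtain ⟨x, -, hx⟩ := SetLike.exists_of_lt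
    ((lt_top_iff_ne_top.mpr hne) : Submodule.span ℝ ({v, v'} : Set V) < ⊤)
  exact ⟨x, hx⟩

-- separate on the left factor
private lemma sep_left {V M : Type*} [AddCommGroup V] [Module ℝ V]
    [AddCommGroup M] [Module ℝ M]
    {v v' v'' : V} (h : v'' ∉ Submodule.span ℝ {v, v'}) {a b c : M}
    (heq : v'' ⊗ₜ[ℝ] c + v ⊗ₜ[ℝ] a + v' ⊗ₜ[ℝ] b = 0) : c = 0 := by
  obtain ⟨f, hf, hf', hf''⟩ := exists_dual_fun h
  have := congrArg ((TensorProduct.lid ℝ M).toLinearMap ∘ₗ f.rTensor M) heq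
  simpa [hf, hf', hf''] using this

-- separate on the right factor
private lemma sep_right {V M : Type*} [AddCommGroup V] [Module ℝ V]
    [AddCommGroup M] [Module ℝ M]
    {q q' q'' : M} (h : q'' ∉ Submodule.span ℝ {q, q'}) {a b c : V}
    (heq : c ⊗ₜ[ℝ] q'' + a ⊗ₜ[ℝ] q + b ⊗ₜ[ℝ] q' = 0) : c = 0 := by
  obtain ⟨f, hf, hf', hf''⟩ := exists_dual_fun h
  have := congrArg ((TensorProduct.rid ℝ V).toLinearMap ∘ₗ f.lTensor V) heq
  simpa [hf, hf', hf''] using this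

private lemma bilin_eq_zero {V Q W N : Type*} [AddCommGroup V] [Module ℝ V]
    [AddCommGroup Q] [Module ℝ Q] [AddCommGroup W] [Module ℝ W]
    [AddCommGroup N] [Module ℝ N]
    (B : ((V ⊗[ℝ] Q) × W) →ₗ[ℝ] ((V ⊗[ℝ] Q) × W) →ₗ[ℝ] N)
    (h : ∀ (vx : V) (qx : Q) (wx : W) (vy : V) (qy : Q) (wy : W),
      B (vx ⊗ₜ[ℝ] qx, wx) (vy ⊗ₜ[ℝ] qy, wy) = 0) :
    ∀ x y, B x y = 0 := by
  have step1 : ∀ (vx : V) (qx : Q) (wx : W) (y), B (vx ⊗ₜ[ℝ] qx, wx) y = 0 := by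
    intro vx qx wx y
    obtain ⟨y1, y2⟩ := y
    induction y1 using TensorProduct.induction_on generalizing y2 with
    | zero => simpa using h vx qx wx 0 0 y2
    | tmul vy qy => exact h vx qx wx vy qy y2
    | add a b ha hb =>
      have hsplit : ((a + b : V ⊗[ℝ] Q), y2) = ((a, y2) + (b, 0) : (V ⊗[ℝ] Q) × W) := by
        simp [Prod.ext_iff]
      rw [hsplit, map_add, ha y2, hb 0, add_zero]
  intro x y
  obtain ⟨x1, x2⟩ := x
  induction x1 using TensorProduct.induction_on generalizing x2 with
  | zero => simpa using step1 0 0 x2 y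
  | tmul vx qx => exact step1 vx qx x2 y
  | add a b ha hb =>
    have hsplit : ((a + b : V ⊗[ℝ] Q), x2) = ((a, x2) + (b, 0) : (V ⊗[ℝ] Q) × W) := by
      simp [Prod.ext_iff]
    rw [hsplit, map_add, LinearMap.add_apply, ha x2, hb 0, add_zero]

/-- Let `V, Q, W` be finite-dimensional real vector spaces with
`Q` a 3-dimensional inner product space and `dim V ≥ 3`, and suppose the curvature
operators `R^V : Λ²T → End(V)`, `R^Q : Λ²T → so(Q)`, `R^W : Λ²T → End(W)` on
`T = (V⊗Q) ⊕ W` combine to `R = (R^V ⊗ id_Q + id_V ⊗ R^Q) ⊕ R^W` satisfying the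
algebraic first Bianchi identity on `T`. If `R^Q = 0` then `R^V = 0`; conversely,
if `R^V = 0` and `dim W > 0`, then `R^Q = 0`. -/
theorem RQ_flat_iff_RV_flat
    {V W : Type*} [AddCommGroup V] [Module ℝ V] [AddCommGroup W] [Module ℝ W]
    {Q : Type*} [NormedAddCommGroup Q] [InnerProductSpace ℝ Q]
    [FiniteDimensional ℝ V] [FiniteDimensional ℝ Q] [FiniteDimensional ℝ W]
    (hQ : finrank ℝ Q = 3) (hV : 3 ≤ finrank ℝ V)
    (RV : ((V ⊗[ℝ] Q) × W) →ₗ[ℝ] ((V ⊗[ℝ] Q) × W) →ₗ[ℝ] Module.End ℝ V)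
    (RQ : ((V ⊗[ℝ] Q) × W) →ₗ[ℝ] ((V ⊗[ℝ] Q) × W) →ₗ[ℝ] Module.End ℝ Q)
    (RW : ((V ⊗[ℝ] Q) × W) →ₗ[ℝ] ((V ⊗[ℝ] Q) × W) →ₗ[ℝ] Module.End ℝ W)
    (hAltV : ∀ t, RV t t = 0) (hAltQ : ∀ t, RQ t t = 0) (hAltW : ∀ t, RW t t = 0)
    -- `R^Q` takes values in the skew-symmetric endomorphisms of `Q`
    (hskew : ∀ (x y : (V ⊗[ℝ] Q) × W) (A : Q), ⟪RQ x y A, A⟫ = 0)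
    (Rfull : ((V ⊗[ℝ] Q) × W) → ((V ⊗[ℝ] Q) × W) →
      ((V ⊗[ℝ] Q) × W) →ₗ[ℝ] ((V ⊗[ℝ] Q) × W))
    (hRfull : ∀ x y, Rfull x y =
      LinearMap.prodMap
        (TensorProduct.map (RV x y) LinearMap.id + TensorProduct.map LinearMap.id (RQ x y))
        (RW x y))
    (hBianchi : ∀ x y z : (V ⊗[ℝ] Q) × W,
      Rfull x y z + Rfull y z x + Rfull z x y = 0) :
    ((∀ x y, RQ x y = 0) → (∀ x y, RV x y = 0)) ∧
    ((∀ x y, RV x y = 0) → 0 < finrank ℝ W → (∀ x y, RQ x y = 0)) := by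
  constructor
  · intro hRQ
    refine bilin_eq_zero RV ?_
    intro vx qx wx vy qy wy
    obtain ⟨q'', hq''⟩ := exists_notin_span hQ.ge qx qy
    ext v''
    have hb := congrArg Prod.fst
      (hBianchi (vx ⊗ₜ qx, wx) (vy ⊗ₜ qy, wy) (v'' ⊗ₜ q'', 0))
    rw [hRfull, hRfull, hRfull] at hb
    simp only [LinearMap.prodMap_apply, Prod.fst_add, LinearMap.add_apply,
      TensorProduct.map_tmul, LinearMap.id_coe, id_eq, hRQ, LinearMap.zero_apply,
      TensorProduct.tmul_zero, add_zero, Prod.fst_zero] at hb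
    simpa using sep_right hq'' hb
  · intro hRV _
    refine bilin_eq_zero RQ ?_
    intro vx qx wx vy qy wy
    obtain ⟨v'', hv''⟩ := exists_notin_span hV vx vy
    ext q''
    have hb := congrArg Prod.fst
      (hBianchi (vx ⊗ₜ qx, wx) (vy ⊗ₜ qy, wy) (v'' ⊗ₜ q'', 0))
    rw [hRfull, hRfull, hRfull] at hb
    simp only [LinearMap.prodMap_apply, Prod.fst_add, LinearMap.add_apply,
      TensorProduct.map_tmul, LinearMap.id_coe, id_eq, hRV, LinearMap.zero_apply,
      TensorProduct.zero_tmul, zero_add, Prod.fst_zero] at hb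
    simpa using sep_left hv'' hb
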